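/- arXiv:1006.0367 — 2 statements merged into one kernel-verified Lean document; each statement's English description precedes it below -/
import Mathlib

section
/- Define a linear endomorphism S of NCSym on the basis of set partitions by S(A) := ∑_{γ ∈ Γ(r)} (−1)^{ℓ(γ)} γ[A], where r = ℓ(A) (and S(∅) = ∅). Then S is the antipode of NCSym: m∘(S⊗id)∘Δ = η∘ε = m∘(id⊗S)∘Δ, where m is the multiplication, Δ the comultiplication, ε the counit and η the unit of NCSym. -/
open Finset

/-- `[n] = {1, …, n}` as a finset of naturals. -/
def seg (n : ℕ) : Finset ℕ := Finset.Icc 1 n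

/-- A (raw) collection of blocks. -/
abbrev Blocks := Finset (Finset ℕ)

/-- The ground set (union of the blocks). -/
def ground (A : Blocks) : Finset ℕ := A.sup id

/-- `A` is a set partition of the finite set `X`: nonempty pairwise disjoint blocks with union `X`. -/
def IsPartitionOf (A : Blocks) (X : Finset ℕ) : Prop :=
  (∀ B ∈ A, B.Nonempty) ∧ (A : Set (Finset ℕ)).PairwiseDisjoint id ∧ ground A = X

/-- `A` is a set partition of `[n]`. -/
def IsSP (A : Blocks) (n : ℕ) : Prop := IsPartitionOf A (seg n)

/-- The unique increasing bijection from `X` onto `[#X]`. -/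
def stdFun (X : Finset ℕ) (x : ℕ) : ℕ := (X.filter (· < x)).card + 1

/-- Standardization of a collection of blocks. -/
def stdP (A : Blocks) : Blocks := A.image fun B => B.image (stdFun (ground A))

/-- Shift all entries of all blocks up by `k`. -/
def shiftP (A : Blocks) (k : ℕ) : Blocks := A.image fun B => B.image (· + k)

/-- Concatenation `A | B` of set partitions: shift `B` up by the weight of `A`. -/
def concatP (A B : Blocks) : Blocks := A ∪ shiftP B (ground A).card

/-- The `i`-th block of `A` (1-based), where blocks are ordered by increasing minima. -/
def blockAt (A : Blocks) (i : ℕ) : Finset ℕ :=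
  (A.filter fun B => (A.filter fun C => C.min ≤ B.min).card = i).sup id

/-- `A_J` : the subcollection of blocks of `A` indexed by `J`. -/
def subColl (A : Blocks) (J : Finset ℕ) : Blocks := J.image (blockAt A)

/-- `A` is an atomic set partition of `[n]`. -/
def IsAtomicSP (A : Blocks) (n : ℕ) : Prop :=
  IsSP A n ∧ 1 ≤ n ∧
    ¬ ∃ m B C, 0 < m ∧ m < n ∧ IsSP B m ∧ IsSP C (n - m) ∧ A = concatP B C

/-- Raw set compositions: words whose letters are finsets of naturals. -/
abbrev SComp := List (Finset ℕ)

/-- The union of the letters of a word. -/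
def sunion (γ : SComp) : Finset ℕ := γ.foldr (· ∪ ·) ∅

/-- `γ` is a set composition of `K`. -/
def IsSCompOf (γ : SComp) (K : Finset ℕ) : Prop :=
  (∀ B ∈ γ, B.Nonempty) ∧ γ.Pairwise Disjoint ∧ sunion γ = K

/-- `γ[A] = std(A_{γ₁}) | std(A_{γ₂}) | ⋯ | std(A_{γₛ})`. -/
def applyComp (γ : SComp) (A : Blocks) : Blocks :=
  (γ.map fun g => stdP (subColl A g)).foldr concatP ∅

abbrev NCSym := Blocks →₀ ℚ

/-- The basis element of `NCSym` indexed by a set partition. -/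
noncomputable def bas (A : Blocks) : NCSym := Finsupp.single A 1

/-- `p(A) = ∑_{γ ∈ Γ'(r)} (-1)^{ℓ(γ)-1} γ[A]`. -/
noncomputable def pNC (A : Blocks) (r : ℕ) : NCSym :=
  ∑ᶠ γ ∈ {γ : SComp | IsSCompOf γ (seg r) ∧ 1 ∈ γ.headI},
    ((-1 : ℚ) ^ (γ.length - 1)) • bas (applyComp γ A)

open TensorProduct in
/-- `Δ(A) = ∑_{K ⊔ L = [r]} std(A_K) ⊗ std(A_L)` on a basis element. -/
noncomputable def deltaB (A : Blocks) : NCSym ⊗[ℚ] NCSym :=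
  ∑ K ∈ (seg A.card).powerset,
    bas (stdP (subColl A K)) ⊗ₜ[ℚ] bas (stdP (subColl A (seg A.card \ K)))

/-- The coproduct of `NCSym`, extended linearly. -/
noncomputable def Delta : NCSym →ₗ[ℚ] TensorProduct ℚ NCSym NCSym :=
  Finsupp.lsum ℚ fun A => LinearMap.toSpanSingleton ℚ _ (deltaB A)

/-- The antipode on a basis element: `S(A) = ∑_{γ ∈ Γ(r)} (-1)^{ℓ(γ)} γ[A]`, `r = ℓ(A)`. -/
noncomputable def SmapB (A : Blocks) : NCSym :=
  ∑ᶠ γ ∈ {γ : SComp | IsSCompOf γ (seg A.card)}, ((-1 : ℚ) ^ γ.length) • bas (applyComp γ A)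

/-- The candidate antipode of `NCSym`, extended linearly. -/
noncomputable def Smap : NCSym →ₗ[ℚ] NCSym :=
  Finsupp.lsum ℚ fun A => LinearMap.toSpanSingleton ℚ _ (SmapB A)

/-- The multiplication of `NCSym` as a bilinear map: `A ⋅ B = A|B` on basis elements. -/
noncomputable def mulLin : NCSym →ₗ[ℚ] NCSym →ₗ[ℚ] NCSym :=
  Finsupp.lsum ℚ fun A => LinearMap.toSpanSingleton ℚ _
    ((Finsupp.lsum ℚ fun B => LinearMap.toSpanSingleton ℚ _ (bas (concatP A B))) :
      NCSym →ₗ[ℚ] NCSym)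

/-- The multiplication of `NCSym` as a linear map on the tensor square. -/
noncomputable def mLin : TensorProduct ℚ NCSym NCSym →ₗ[ℚ] NCSym := TensorProduct.lift mulLin

/-- The unit of `NCSym`. -/
noncomputable def etaLin : ℚ →ₗ[ℚ] NCSym := LinearMap.toSpanSingleton ℚ _ (bas (∅ : Blocks))

/-- The counit of `NCSym`: `ε(∅) = 1` and `ε(A) = 0` for `A ≠ ∅`. -/
noncomputable def epsLin : NCSym →ₗ[ℚ] ℚ :=
  Finsupp.lsum ℚ fun A => if A = (∅ : Blocks) then LinearMap.id else 0
section Basics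

lemma seg_zero : seg 0 = ∅ := by simp [seg]

lemma mem_seg {x n : ℕ} : x ∈ seg n ↔ 1 ≤ x ∧ x ≤ n := Finset.mem_Icc

lemma card_seg (n : ℕ) : (seg n).card = n := by simp [seg]

lemma seg_eq_empty_iff {n : ℕ} : seg n = ∅ ↔ n = 0 := by
  constructor
  · intro h
    by_contra hn
    have h1 : 1 ∈ seg n := mem_seg.2 ⟨le_refl _, Nat.one_le_iff_ne_zero.2 hn⟩
    simp [h] at h1
  · rintro rfl; exact seg_zero

/-- Nonempty pairwise disjoint blocks. -/
def IsPart (A : Blocks) : Prop :=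
  (∀ B ∈ A, B.Nonempty) ∧ (A : Set (Finset ℕ)).PairwiseDisjoint id

lemma IsPartitionOf.isPart {A : Blocks} {X : Finset ℕ} (h : IsPartitionOf A X) : IsPart A :=
  ⟨h.1, h.2.1⟩

lemma isPart_empty : IsPart (∅ : Blocks) := by
  constructor
  · simp
  · simp

lemma subset_ground {A : Blocks} {B : Finset ℕ} (hB : B ∈ A) : B ⊆ ground A :=
  Finset.le_sup (f := id) hB

lemma ground_union (A B : Blocks) : ground (A ∪ B) = ground A ∪ ground B :=
  Finset.sup_union

lemma ground_insert (B : Finset ℕ) (A : Blocks) : ground (insert B A) = B ∪ ground A :=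
  Finset.sup_insert

lemma ground_empty : ground (∅ : Blocks) = ∅ := rfl

lemma ground_mapB (A : Blocks) (f : ℕ → ℕ) :
    ground (A.image fun B => B.image f) = (ground A).image f := by
  classical
  induction A using Finset.induction_on with
  | empty => simp [ground]
  | insert _ _ hB ih =>
      rw [Finset.image_insert, ground_insert, ground_insert, Finset.image_union, ih]

lemma ground_subset {A : Blocks} {S : Finset ℕ} (h : ∀ B ∈ A, B ⊆ S) : ground A ⊆ S :=
  Finset.sup_le h

end Basics

section StdFun

/-- strict monotonicity convention used throughout -/
def SMonoOn (f : ℕ → ℕ) (X : Finset ℕ) : Prop := ∀ x ∈ X, ∀ y ∈ X, x < y → f x < f y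

lemma SMonoOn.injOn {f : ℕ → ℕ} {X : Finset ℕ} (hf : SMonoOn f X) :
    ∀ x ∈ X, ∀ y ∈ X, f x = f y → x = y := by
  intro x hx y hy hxy
  rcases lt_trichotomy x y with h | h | h
  · exact absurd hxy (ne_of_lt (hf x hx y hy h))
  · exact h
  · exact absurd hxy.symm (ne_of_lt (hf y hy x hx h))

lemma SMonoOn.lt_iff {f : ℕ → ℕ} {X : Finset ℕ} (hf : SMonoOn f X)
    {x y : ℕ} (hx : x ∈ X) (hy : y ∈ X) : f x < f y ↔ x < y := by
  constructor
  · intro h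
    rcases lt_trichotomy x y with h' | h' | h'
    · exact h'
    · subst h'; exact absurd h (lt_irrefl _)
    · exact absurd (hf y hy x hx h') (not_lt_of_gt h)
  · exact hf x hx y hy

lemma SMonoOn.le_iff {f : ℕ → ℕ} {X : Finset ℕ} (hf : SMonoOn f X)
    {x y : ℕ} (hx : x ∈ X) (hy : y ∈ X) : f x ≤ f y ↔ x ≤ y := by
  rw [← not_lt, ← not_lt, hf.lt_iff hy hx]

lemma SMonoOn.mono {f : ℕ → ℕ} {X Y : Finset ℕ} (hf : SMonoOn f X) (h : Y ⊆ X) :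
    SMonoOn f Y := fun x hx y hy => hf x (h hx) y (h hy)

lemma stdFun_sMonoOn (X : Finset ℕ) : SMonoOn (stdFun X) X := by
  intro x hx y _ hxy
  have hss : X.filter (· < x) ⊂ X.filter (· < y) := by
    rw [Finset.ssubset_iff_of_subset
      (Finset.monotone_filter_right X (fun z _ hz => lt_trans hz hxy))]
    exact ⟨x, Finset.mem_filter.2 ⟨hx, hxy⟩, fun hc => by simp at hc⟩
  have := Finset.card_lt_card hss
  simp only [stdFun]
  omega

lemma stdFun_mem_seg {X : Finset ℕ} {x : ℕ} (hx : x ∈ X) : stdFun X x ∈ seg X.card := by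
  rw [mem_seg, stdFun]
  constructor
  · omega
  · have h1 : X.filter (· < x) ⊆ X.erase x := by
      intro y hy
      rw [Finset.mem_erase]
      rw [Finset.mem_filter] at hy
      exact ⟨ne_of_lt hy.2, hy.1⟩
    have h2 := Finset.card_le_card h1
    rw [Finset.card_erase_of_mem hx] at h2
    have h3 : 1 ≤ X.card := Finset.card_pos.2 ⟨x, hx⟩
    omega

lemma image_stdFun (X : Finset ℕ) : X.image (stdFun X) = seg X.card := by
  apply Finset.eq_of_subset_of_card_le
  · intro z hz
    rw [Finset.mem_image] at hz
    obtain ⟨x, hx, rfl⟩ := hz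
    exact stdFun_mem_seg hx
  · rw [card_seg, Finset.card_image_of_injOn]
    intro x hx y hy
    exact (stdFun_sMonoOn X).injOn x hx y hy

lemma stdFun_image_apply {X : Finset ℕ} {f : ℕ → ℕ} (hf : SMonoOn f X)
    {x : ℕ} (hx : x ∈ X) : stdFun (X.image f) (f x) = stdFun X x := by
  have hkey : (X.image f).filter (· < f x) = (X.filter (· < x)).image f := by
    ext z
    simp only [Finset.mem_filter, Finset.mem_image]
    constructor
    · rintro ⟨⟨y, hy, rfl⟩, hlt⟩
      exact ⟨y, ⟨hy, (hf.lt_iff hy hx).1 hlt⟩, rfl⟩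
    · rintro ⟨y, ⟨hy1, hy2⟩, rfl⟩
      exact ⟨⟨y, hy1, rfl⟩, hf y hy1 x hx hy2⟩
  rw [stdFun, stdFun, hkey, Finset.card_image_of_injOn]
  intro a ha b hb
  exact hf.injOn a (Finset.mem_of_mem_filter a ha) b (Finset.mem_of_mem_filter b hb)

end StdFun
section BlockAt

/-- rank of a block among the blocks of `A`, by increasing minima (1-based). -/
def rk (A : Blocks) (B : Finset ℕ) : ℕ := (A.filter fun C => C.min ≤ B.min).card

lemma blockAt_def (A : Blocks) (i : ℕ) :
    blockAt A i = (A.filter fun B => rk A B = i).sup id := rfl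

variable {A : Blocks} {B C : Finset ℕ}

lemma eq_of_min_eq (h : IsPart A) (hB : B ∈ A) (hC : C ∈ A) (hmin : B.min = C.min) : B = C := by
  by_contra hne
  have hBne : B.Nonempty := h.1 B hB
  have hCne : C.Nonempty := h.1 C hC
  have hb : ((B.min' hBne : ℕ) : WithBot ℕ) = B.min := Finset.coe_min' hBne
  have hc : ((C.min' hCne : ℕ) : WithBot ℕ) = C.min := Finset.coe_min' hCne
  have heq : B.min' hBne = C.min' hCne := by
    have h2 := hb.trans (hmin.trans hc.symm)
    exact_mod_cast h2
  have hd : Disjoint B C := h.2 (Finset.mem_coe.2 hB) (Finset.mem_coe.2 hC) hne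
  exact Finset.disjoint_left.1 hd (Finset.min'_mem B hBne)
    (heq ▸ Finset.min'_mem C hCne)

lemma rk_lt_rk (h : IsPart A) (hC : C ∈ A) (hmin : B.min < C.min) : rk A B < rk A C := by
  apply Finset.card_lt_card
  rw [Finset.ssubset_iff_of_subset (Finset.monotone_filter_right A
    (fun D _ hD => le_trans hD (le_of_lt hmin)))]
  exact ⟨C, Finset.mem_filter.2 ⟨hC, le_refl _⟩, fun hc => by
    rw [Finset.mem_filter] at hc
    exact absurd hmin (not_lt_of_ge hc.2)⟩

lemma rk_injOn (h : IsPart A) (hB : B ∈ A) (hC : C ∈ A) (hrk : rk A B = rk A C) : B = C := by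
  rcases lt_trichotomy B.min C.min with hm | hm | hm
  · exact absurd hrk (ne_of_lt (rk_lt_rk h hC hm))
  · exact eq_of_min_eq h hB hC hm
  · exact absurd hrk.symm (ne_of_lt (rk_lt_rk h hB hm))

lemma min_le_iff_rk_le (h : IsPart A) (hB : B ∈ A) (hC : C ∈ A) :
    B.min ≤ C.min ↔ rk A B ≤ rk A C := by
  constructor
  · intro hm
    rcases eq_or_lt_of_le hm with hm | hm
    · rw [eq_of_min_eq h hB hC hm]
    · exact le_of_lt (rk_lt_rk h hC hm)
  · intro hr
    by_contra hm
    rw [not_le] at hm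
    exact absurd hr (not_le_of_gt (rk_lt_rk h hB hm))

lemma rk_mem_seg (hB : B ∈ A) : rk A B ∈ seg A.card := by
  rw [mem_seg, rk]
  refine ⟨Finset.card_pos.2 ⟨B, Finset.mem_filter.2 ⟨hB, le_refl _⟩⟩, ?_⟩
  exact Finset.card_le_card (Finset.filter_subset _ _)

lemma image_rk (h : IsPart A) : A.image (rk A) = seg A.card := by
  apply Finset.eq_of_subset_of_card_le
  · intro z hz
    rw [Finset.mem_image] at hz
    obtain ⟨B, hB, rfl⟩ := hz
    exact rk_mem_seg hB
  · rw [card_seg, Finset.card_image_of_injOn (fun B hB C hC => rk_injOn h hB hC)]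

lemma blockAt_rk (h : IsPart A) (hB : B ∈ A) : blockAt A (rk A B) = B := by
  have hfil : (A.filter fun C => rk A C = rk A B) = {B} := by
    ext C
    rw [Finset.mem_filter, Finset.mem_singleton]
    constructor
    · rintro ⟨hC, hr⟩; exact rk_injOn h hC hB hr
    · rintro rfl; exact ⟨hB, rfl⟩
  rw [blockAt_def, hfil, Finset.sup_singleton]
  rfl

lemma exists_rk_eq (h : IsPart A) {i : ℕ} (hi : i ∈ seg A.card) : ∃ B ∈ A, rk A B = i := by
  rw [← image_rk h, Finset.mem_image] at hi
  exact hi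

lemma blockAt_mem (h : IsPart A) {i : ℕ} (hi : i ∈ seg A.card) : blockAt A i ∈ A := by
  obtain ⟨B, hB, rfl⟩ := exists_rk_eq h hi
  rw [blockAt_rk h hB]; exact hB

lemma rk_blockAt (h : IsPart A) {i : ℕ} (hi : i ∈ seg A.card) : rk A (blockAt A i) = i := by
  obtain ⟨B, hB, rfl⟩ := exists_rk_eq h hi
  rw [blockAt_rk h hB]

lemma blockAt_injOn (h : IsPart A) {i j : ℕ} (hi : i ∈ seg A.card) (hj : j ∈ seg A.card)
    (hij : blockAt A i = blockAt A j) : i = j := by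
  rw [← rk_blockAt h hi, ← rk_blockAt h hj, hij]

lemma image_blockAt (h : IsPart A) : (seg A.card).image (blockAt A) = A := by
  apply Finset.eq_of_subset_of_card_le
  · intro B hB
    rw [Finset.mem_image] at hB
    obtain ⟨i, hi, rfl⟩ := hB
    exact blockAt_mem h hi
  · rw [Finset.card_image_of_injOn (fun i hi j hj => blockAt_injOn h hi hj), card_seg]

lemma min_blockAt_le_iff (h : IsPart A) {i j : ℕ} (hi : i ∈ seg A.card) (hj : j ∈ seg A.card) :
    (blockAt A i).min ≤ (blockAt A j).min ↔ i ≤ j := by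
  rw [min_le_iff_rk_le h (blockAt_mem h hi) (blockAt_mem h hj), rk_blockAt h hi,
    rk_blockAt h hj]

end BlockAt
section SubColl

variable {A : Blocks} {K : Finset ℕ}

lemma subColl_def (A : Blocks) (K : Finset ℕ) : subColl A K = K.image (blockAt A) := rfl

lemma subColl_empty (A : Blocks) : subColl A ∅ = ∅ := by simp [subColl]

lemma subColl_subset (h : IsPart A) (hK : K ⊆ seg A.card) : subColl A K ⊆ A := by
  intro B hB
  rw [subColl_def, Finset.mem_image] at hB
  obtain ⟨j, hj, rfl⟩ := hB
  exact blockAt_mem h (hK hj)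

lemma isPart_subColl (h : IsPart A) (hK : K ⊆ seg A.card) : IsPart (subColl A K) := by
  refine ⟨fun B hB => h.1 B (subColl_subset h hK hB), ?_⟩
  exact h.2.subset (Finset.coe_subset.2 (subColl_subset h hK))

lemma card_subColl (h : IsPart A) (hK : K ⊆ seg A.card) : (subColl A K).card = K.card := by
  rw [subColl_def, Finset.card_image_of_injOn]
  intro i hi j hj
  exact blockAt_injOn h (hK hi) (hK hj)

lemma subColl_univ (h : IsPart A) : subColl A (seg A.card) = A := image_blockAt h

lemma ground_subColl_subset (h : IsPart A) (hK : K ⊆ seg A.card) :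
    ground (subColl A K) ⊆ ground A :=
  ground_subset fun B hB => subset_ground (subColl_subset h hK hB)

lemma blockAt_mem_subColl (h : IsPart A) {j : ℕ} (hj : j ∈ K) :
    blockAt A j ∈ subColl A K := by
  rw [subColl_def, Finset.mem_image]
  exact ⟨j, hj, rfl⟩

lemma rk_subColl (h : IsPart A) (hK : K ⊆ seg A.card) {j : ℕ} (hj : j ∈ K) :
    rk (subColl A K) (blockAt A j) = stdFun K j := by
  have hfil : (subColl A K).filter (fun C => C.min ≤ (blockAt A j).min)
      = (K.filter (· ≤ j)).image (blockAt A) := by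
    ext C
    rw [Finset.mem_filter, Finset.mem_image]
    constructor
    · rintro ⟨hC, hmin⟩
      rw [subColl_def, Finset.mem_image] at hC
      obtain ⟨j', hj', rfl⟩ := hC
      refine ⟨j', Finset.mem_filter.2 ⟨hj', ?_⟩, rfl⟩
      exact (min_blockAt_le_iff h (hK hj') (hK hj)).1 hmin
    · rintro ⟨j', hj', rfl⟩
      rw [Finset.mem_filter] at hj'
      exact ⟨blockAt_mem_subColl h hj'.1,
        (min_blockAt_le_iff h (hK hj'.1) (hK hj)).2 hj'.2⟩
  have hle : K.filter (· ≤ j) = insert j (K.filter (· < j)) := by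
    ext c
    simp only [Finset.mem_filter, Finset.mem_insert]
    constructor
    · rintro ⟨hc, hcj⟩
      rcases eq_or_lt_of_le hcj with h' | h'
      · exact Or.inl h'
      · exact Or.inr ⟨hc, h'⟩
    · rintro (rfl | ⟨hc, hcj⟩)
      · exact ⟨hj, le_refl _⟩
      · exact ⟨hc, le_of_lt hcj⟩
  rw [rk, hfil, Finset.card_image_of_injOn
    (fun a ha b hb => blockAt_injOn h (hK (Finset.mem_of_mem_filter a ha))
      (hK (Finset.mem_of_mem_filter b hb))), hle,
    Finset.card_insert_of_notMem (by simp), stdFun]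

lemma blockAt_subColl (h : IsPart A) (hK : K ⊆ seg A.card) {j : ℕ} (hj : j ∈ K) :
    blockAt (subColl A K) (stdFun K j) = blockAt A j := by
  have hmem := blockAt_mem_subColl (K := K) h hj
  have := blockAt_rk (isPart_subColl h hK) hmem
  rwa [rk_subColl h hK hj] at this

end SubColl
section StdP

/-- Map every element of every block. -/
def mapB (f : ℕ → ℕ) (A : Blocks) : Blocks := A.image fun B => B.image f

variable {A : Blocks} {f : ℕ → ℕ} {B C : Finset ℕ}

lemma stdP_def (A : Blocks) : stdP A = mapB (stdFun (ground A)) A := rfl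

lemma stdP_empty : stdP (∅ : Blocks) = ∅ := by simp [stdP]

lemma disjoint_image_of {X : Finset ℕ} (hf : SMonoOn f X) (hB : B ⊆ X) (hC : C ⊆ X)
    (hd : Disjoint B C) : Disjoint (B.image f) (C.image f) := by
  rw [Finset.disjoint_left]
  rintro z hz1 hz2
  rw [Finset.mem_image] at hz1 hz2
  obtain ⟨b, hb, rfl⟩ := hz1
  obtain ⟨c, hc, hcb⟩ := hz2
  have : c = b := hf.injOn c (hC hc) b (hB hb) hcb
  subst this
  exact Finset.disjoint_left.1 hd hb hc

lemma blockImage_injOn (h : IsPart A) (hf : SMonoOn f (ground A)) (hB : B ∈ A) (hC : C ∈ A)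
    (heq : B.image f = C.image f) : B = C := by
  by_contra hne
  have hd := disjoint_image_of hf (subset_ground hB) (subset_ground hC)
    (h.2 (Finset.mem_coe.2 hB) (Finset.mem_coe.2 hC) hne)
  rw [heq] at hd
  have hne' : (C.image f).Nonempty := (h.1 C hC).image f
  exact hne'.ne_empty (disjoint_self.1 hd)

lemma isPart_mapB (h : IsPart A) (hf : SMonoOn f (ground A)) : IsPart (mapB f A) := by
  constructor
  · intro B' hB'
    rw [mapB, Finset.mem_image] at hB'
    obtain ⟨B, hB, rfl⟩ := hB'
    exact (h.1 B hB).image f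
  · intro B' hB' C' hC' hne
    rw [Finset.mem_coe, mapB, Finset.mem_image] at hB' hC'
    obtain ⟨B, hB, rfl⟩ := hB'
    obtain ⟨C, hC, rfl⟩ := hC'
    have hBC : B ≠ C := fun hh => hne (by rw [hh])
    exact disjoint_image_of hf (subset_ground hB) (subset_ground hC)
      (h.2 (Finset.mem_coe.2 hB) (Finset.mem_coe.2 hC) hBC)

lemma card_mapB (h : IsPart A) (hf : SMonoOn f (ground A)) : (mapB f A).card = A.card :=
  Finset.card_image_of_injOn fun B hB C hC => blockImage_injOn h hf hB hC

lemma min'_image {X : Finset ℕ} (hf : SMonoOn f X) (hB : B ⊆ X) (hne : B.Nonempty) :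
    (B.image f).min' (hne.image f) = f (B.min' hne) := by
  apply le_antisymm
  · exact Finset.min'_le _ _ (Finset.mem_image_of_mem f (Finset.min'_mem B hne))
  · apply Finset.le_min'
    intro z hz
    rw [Finset.mem_image] at hz
    obtain ⟨b, hb, rfl⟩ := hz
    exact (hf.le_iff (hB (Finset.min'_mem B hne)) (hB hb)).2 (Finset.min'_le B b hb)

lemma min_image_le_iff {X : Finset ℕ} (hf : SMonoOn f X) (hB : B ⊆ X) (hC : C ⊆ X)
    (hBne : B.Nonempty) (hCne : C.Nonempty) :
    (B.image f).min ≤ (C.image f).min ↔ B.min ≤ C.min := by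
  rw [← Finset.coe_min' hBne, ← Finset.coe_min' hCne,
    ← Finset.coe_min' (hBne.image f), ← Finset.coe_min' (hCne.image f),
    min'_image hf hB hBne, min'_image hf hC hCne]
  have hh := hf.le_iff (hB (Finset.min'_mem B hBne)) (hC (Finset.min'_mem C hCne))
  exact_mod_cast hh

lemma rk_mapB (h : IsPart A) (hf : SMonoOn f (ground A)) (hB : B ∈ A) :
    rk (mapB f A) (B.image f) = rk A B := by
  have hfil : (mapB f A).filter (fun C' => C'.min ≤ (B.image f).min)
      = (A.filter fun C => C.min ≤ B.min).image (fun C => C.image f) := by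
    ext C'
    rw [Finset.mem_filter, Finset.mem_image]
    constructor
    · rintro ⟨hC', hmin⟩
      rw [mapB, Finset.mem_image] at hC'
      obtain ⟨C, hC, rfl⟩ := hC'
      refine ⟨C, Finset.mem_filter.2 ⟨hC, ?_⟩, rfl⟩
      exact (min_image_le_iff hf (subset_ground hC) (subset_ground hB)
        (h.1 C hC) (h.1 B hB)).1 hmin
    · rintro ⟨C, hC, rfl⟩
      rw [Finset.mem_filter] at hC
      refine ⟨Finset.mem_image_of_mem _ hC.1, ?_⟩
      exact (min_image_le_iff hf (subset_ground hC.1) (subset_ground hB)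
        (h.1 C hC.1) (h.1 B hB)).2 hC.2
  rw [rk, hfil, Finset.card_image_of_injOn, rk]
  intro a ha b hb
  exact blockImage_injOn h hf (Finset.mem_of_mem_filter a ha) (Finset.mem_of_mem_filter b hb)

lemma blockAt_mapB (h : IsPart A) (hf : SMonoOn f (ground A)) {i : ℕ} (hi : i ∈ seg A.card) :
    blockAt (mapB f A) i = (blockAt A i).image f := by
  have hBmem := blockAt_mem h hi
  have h1 : rk (mapB f A) ((blockAt A i).image f) = i := by
    rw [rk_mapB h hf hBmem, rk_blockAt h hi]
  have h2 := blockAt_rk (isPart_mapB h hf) (Finset.mem_image_of_mem _ hBmem : _ ∈ mapB f A)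
  rwa [h1] at h2

lemma stdFun_ground_sMonoOn (A : Blocks) : SMonoOn (stdFun (ground A)) (ground A) :=
  stdFun_sMonoOn _

lemma ground_stdP (A : Blocks) : ground (stdP A) = seg (ground A).card := by
  rw [stdP_def, mapB, ground_mapB, image_stdFun]

lemma isPart_stdP (h : IsPart A) : IsPart (stdP A) :=
  isPart_mapB h (stdFun_ground_sMonoOn A)

lemma isSP_stdP (h : IsPart A) : IsSP (stdP A) (ground A).card :=
  ⟨(isPart_stdP h).1, (isPart_stdP h).2, ground_stdP A⟩

lemma card_stdP (h : IsPart A) : (stdP A).card = A.card :=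
  card_mapB h (stdFun_ground_sMonoOn A)

lemma blockAt_stdP (h : IsPart A) {i : ℕ} (hi : i ∈ seg A.card) :
    blockAt (stdP A) i = (blockAt A i).image (stdFun (ground A)) :=
  blockAt_mapB h (stdFun_ground_sMonoOn A) hi

/-- Standardization is invariant under strictly monotone relabelling. -/
lemma stdP_mapB (h : IsPart A) (hf : SMonoOn f (ground A)) : stdP (mapB f A) = stdP A := by
  rw [stdP_def, stdP_def]
  have hg : ground (mapB f A) = (ground A).image f := ground_mapB A f
  rw [mapB, mapB, mapB, Finset.image_image]
  apply Finset.image_congr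
  intro B hB
  rw [Function.comp_apply, Finset.image_image]
  apply Finset.image_congr
  intro b hb
  rw [Function.comp_apply, ground_mapB]
  exact stdFun_image_apply hf (subset_ground hB hb)
end StdP
section Concat

variable {a b c A : Blocks} {m p q : ℕ}

lemma IsSP.isPart {n : ℕ} (h : IsSP A n) : IsPart A := ⟨h.1, h.2.1⟩

lemma IsSP.ground_eq {n : ℕ} (h : IsSP A n) : ground A = seg n := h.2.2

lemma seg_card_ground {n : ℕ} (h : IsSP A n) : (ground A).card = n := by
  rw [h.ground_eq, card_seg]

lemma isSP_empty : IsSP (∅ : Blocks) 0 := by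
  refine ⟨by simp, by simp, ?_⟩
  rw [ground_empty, seg_zero]

lemma shiftP_def (A : Blocks) (k : ℕ) : shiftP A k = mapB (· + k) A := rfl

lemma ground_shiftP (A : Blocks) (k : ℕ) : ground (shiftP A k) = (ground A).image (· + k) :=
  ground_mapB A _

lemma shiftP_empty (k : ℕ) : shiftP (∅ : Blocks) k = ∅ := by simp [shiftP]

lemma shiftP_zero (A : Blocks) : shiftP A 0 = A := by
  rw [shiftP]
  have h0 : ∀ B : Finset ℕ, B.image (· + 0) = B := fun B => by simp
  rw [Finset.image_congr (fun B _ => h0 B)]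
  exact Finset.image_id

lemma concatP_empty (A : Blocks) : concatP A ∅ = A := by
  rw [concatP, shiftP_empty, Finset.union_empty]

lemma empty_concatP (A : Blocks) : concatP ∅ A = A := by
  rw [concatP, ground_empty]
  simp [shiftP_zero]

lemma shiftP_union (X Y : Blocks) (k : ℕ) : shiftP (X ∪ Y) k = shiftP X k ∪ shiftP Y k :=
  Finset.image_union _ _

lemma shiftP_shiftP (A : Blocks) (p m : ℕ) : shiftP (shiftP A p) m = shiftP A (p + m) := by
  rw [shiftP_def, shiftP_def, shiftP_def, mapB, mapB, mapB, Finset.image_image]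
  apply Finset.image_congr
  intro B _
  rw [Function.comp_apply, Finset.image_image]
  apply Finset.image_congr
  intro x _
  simp [Function.comp_apply]
  omega

lemma seg_union_shift (m p : ℕ) : seg m ∪ (seg p).image (· + m) = seg (m + p) := by
  ext x
  simp only [Finset.mem_union, mem_seg, Finset.mem_image]
  constructor
  · rintro (⟨h1, h2⟩ | ⟨y, ⟨hy1, hy2⟩, rfl⟩) <;> omega
  · rintro ⟨h1, h2⟩
    by_cases hx : x ≤ m
    · exact Or.inl ⟨h1, hx⟩
    · exact Or.inr ⟨x - m, ⟨by omega, by omega⟩, by omega⟩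

lemma isSP_concatP (ha : IsSP a m) (hb : IsSP b p) : IsSP (concatP a b) (m + p) := by
  have hsh : shiftP b (ground a).card = shiftP b m := by rw [seg_card_ground ha]
  have hblocka : ∀ B ∈ a, B ⊆ seg m := fun B hB => ha.ground_eq ▸ subset_ground hB
  have hblocks : ∀ B' ∈ shiftP b m, ∃ B ∈ b, B' = B.image (· + m) := by
    intro B' hB'
    rw [shiftP, Finset.mem_image] at hB'
    obtain ⟨B, hB, rfl⟩ := hB'
    exact ⟨B, hB, rfl⟩
  have hhigh : ∀ B' ∈ shiftP b m, ∀ x ∈ B', m + 1 ≤ x ∧ x ≤ m + p := by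
    intro B' hB' x hx
    obtain ⟨B, hB, rfl⟩ := hblocks B' hB'
    rw [Finset.mem_image] at hx
    obtain ⟨y, hy, rfl⟩ := hx
    have := mem_seg.1 (hb.ground_eq ▸ subset_ground hB hy)
    omega
  rw [concatP, hsh]
  refine ⟨?_, ?_, ?_⟩
  · intro B hB
    rcases Finset.mem_union.1 hB with hB | hB
    · exact ha.1 B hB
    · obtain ⟨C, hC, rfl⟩ := hblocks B hB
      exact (hb.1 C hC).image _
  · intro B' hB' C' hC' hne
    rw [Finset.mem_coe, Finset.mem_union] at hB' hC'
    have cross : ∀ B'' ∈ a, ∀ C'' ∈ shiftP b m, Disjoint (id B'') (id C'') := by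
      intro B'' hB'' C'' hC''
      simp only [id]
      rw [Finset.disjoint_left]
      intro x hx1 hx2
      have h1 := mem_seg.1 (hblocka B'' hB'' hx1)
      have h2 := hhigh C'' hC'' x hx2
      omega
    rcases hB' with hB' | hB' <;> rcases hC' with hC' | hC'
    · exact ha.2.1 (Finset.mem_coe.2 hB') (Finset.mem_coe.2 hC') hne
    · exact cross B' hB' C' hC'
    · exact (cross C' hC' B' hB').symm
    · obtain ⟨B, hB, rfl⟩ := hblocks B' hB'
      obtain ⟨C, hC, rfl⟩ := hblocks C' hC'
      have hBC : B ≠ C := fun hh => hne (by rw [hh])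
      exact (Finset.disjoint_image (add_left_injective m)).2
        (hb.2.1 (Finset.mem_coe.2 hB) (Finset.mem_coe.2 hC) hBC)
  · rw [ground_union, ground_shiftP, ha.ground_eq, hb.ground_eq, seg_union_shift]

lemma concatP_assoc (ha : IsSP a m) (hb : IsSP b p) (hc : IsSP c q) :
    concatP (concatP a b) c = concatP a (concatP b c) := by
  have hab := isSP_concatP ha hb
  have hbc := isSP_concatP hb hc
  show concatP a b ∪ shiftP c (ground (concatP a b)).card = _
  rw [seg_card_ground hab]
  show (a ∪ shiftP b (ground a).card) ∪ _ = a ∪ shiftP (concatP b c) (ground a).card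
  rw [seg_card_ground ha]
  show _ = a ∪ shiftP (b ∪ shiftP c (ground b).card) m
  rw [seg_card_ground hb, shiftP_union, shiftP_shiftP, Finset.union_assoc, Nat.add_comm p m]

end Concat

section ApplyComp

variable {A : Blocks} {γ : SComp} {g L : Finset ℕ}

lemma applyComp_nil (A : Blocks) : applyComp [] A = ∅ := rfl

lemma applyComp_cons (g : Finset ℕ) (γ : SComp) (A : Blocks) :
    applyComp (g :: γ) A = concatP (stdP (subColl A g)) (applyComp γ A) := rfl

lemma isSP_stdP_subColl (h : IsPart A) (hg : g ⊆ seg A.card) :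
    IsSP (stdP (subColl A g)) (ground (subColl A g)).card :=
  isSP_stdP (isPart_subColl h hg)

lemma applyComp_isSP (h : IsPart A) (hγ : ∀ g ∈ γ, g ⊆ seg A.card) :
    ∃ m, IsSP (applyComp γ A) m := by
  induction γ with
  | nil => exact ⟨0, isSP_empty⟩
  | cons g γ ih =>
      obtain ⟨m, hm⟩ := ih (fun g' hg' => hγ g' (List.mem_cons_of_mem _ hg'))
      exact ⟨_, isSP_concatP (isSP_stdP_subColl h (hγ g (List.mem_cons_self))) hm⟩

lemma applyComp_append (h : IsPart A) (hγ : ∀ g ∈ γ, g ⊆ seg A.card) (hL : L ⊆ seg A.card) :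
    applyComp (γ ++ [L]) A = concatP (applyComp γ A) (stdP (subColl A L)) := by
  induction γ with
  | nil =>
      rw [List.nil_append, applyComp_cons, applyComp_nil, concatP_empty, empty_concatP]
  | cons g γ ih =>
      rw [List.cons_append, applyComp_cons, ih (fun g' hg' => hγ g' (List.mem_cons_of_mem _ hg')),
        applyComp_cons]
      obtain ⟨m, hm⟩ := applyComp_isSP h (fun g' hg' => hγ g' (List.mem_cons_of_mem _ hg'))
      exact (concatP_assoc (isSP_stdP_subColl h (hγ g (List.mem_cons_self))) hm
        (isSP_stdP_subColl h hL)).symm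

end ApplyComp
section SComps

variable {γ δ : SComp} {g S : Finset ℕ}

lemma sunion_nil : sunion [] = ∅ := rfl

lemma sunion_cons (g : Finset ℕ) (γ : SComp) : sunion (g :: γ) = g ∪ sunion γ := rfl

lemma sunion_append (γ δ : SComp) : sunion (γ ++ δ) = sunion γ ∪ sunion δ := by
  induction γ with
  | nil => simp [sunion_nil, sunion_cons]
  | cons g γ ih => rw [List.cons_append, sunion_cons, sunion_cons, ih, Finset.union_assoc]

lemma subset_sunion (hg : g ∈ γ) : g ⊆ sunion γ := by
  induction γ with
  | nil => simp at hg
  | cons B γ ih =>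
      rw [sunion_cons]
      rcases List.mem_cons.1 hg with rfl | hg
      · exact Finset.subset_union_left
      · exact (ih hg).trans Finset.subset_union_right

lemma disjoint_sunion (h : ∀ C ∈ γ, Disjoint g C) : Disjoint g (sunion γ) := by
  induction γ with
  | nil => simp [sunion_nil]
  | cons B γ ih =>
      rw [sunion_cons, Finset.disjoint_union_right]
      exact ⟨h B (List.mem_cons_self), ih fun C hC => h C (List.mem_cons_of_mem _ hC)⟩

lemma isSCompOf_nil : IsSCompOf [] (∅ : Finset ℕ) := ⟨by simp, by simp, rfl⟩

lemma isSCompOf_nil_iff : IsSCompOf [] S ↔ S = ∅ := by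
  constructor
  · rintro ⟨-, -, h⟩; exact h.symm
  · rintro rfl; exact isSCompOf_nil

lemma IsSCompOf.cons_elim (h : IsSCompOf (g :: γ) S) :
    g.Nonempty ∧ g ⊆ S ∧ IsSCompOf γ (S \ g) := by
  have hg : g.Nonempty := h.1 g (List.mem_cons_self)
  have hpw := List.pairwise_cons.1 h.2.1
  have hd : Disjoint g (sunion γ) := disjoint_sunion hpw.1
  have hsu : g ∪ sunion γ = S := by rw [← sunion_cons]; exact h.2.2
  have hγS : sunion γ = S \ g := by rw [← hsu, Finset.union_sdiff_cancel_left hd]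
  refine ⟨hg, ?_, ?_, hpw.2, hγS⟩
  · rw [← hsu]; exact Finset.subset_union_left
  · exact fun B hB => h.1 B (List.mem_cons_of_mem _ hB)

lemma IsSCompOf.cons_intro (hγ : IsSCompOf γ (S \ g)) (hg : g.Nonempty) (hgS : g ⊆ S) :
    IsSCompOf (g :: γ) S := by
  refine ⟨?_, ?_, ?_⟩
  · intro B hB
    rcases List.mem_cons.1 hB with rfl | hB
    · exact hg
    · exact hγ.1 B hB
  · rw [List.pairwise_cons]
    refine ⟨fun C hC => ?_, hγ.2.1⟩
    have : C ⊆ S \ g := hγ.2.2 ▸ subset_sunion hC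
    exact Finset.disjoint_of_subset_right this Finset.sdiff_disjoint.symm
  · rw [sunion_cons, hγ.2.2, Finset.union_sdiff_of_subset hgS]

lemma IsSCompOf.length_le (h : IsSCompOf γ S) : γ.length ≤ S.card := by
  induction γ generalizing S with
  | nil => simp
  | cons g γ ih =>
      obtain ⟨hg, hgS, hγ⟩ := h.cons_elim
      have h1 := ih hγ
      have h2 : (S \ g).card = S.card - g.card := Finset.card_sdiff_of_subset hgS
      have h3 : 1 ≤ g.card := Finset.card_pos.2 hg
      have h4 : g.card ≤ S.card := Finset.card_le_card hgS
      simp only [List.length_cons]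
      omega

/-- lists of length ≤ n with letters in `s`. -/
def listsLe : ℕ → Finset (Finset ℕ) → Finset SComp
  | 0, _ => {[]}
  | n + 1, s => {[]} ∪ (s ×ˢ listsLe n s).image fun p => p.1 :: p.2

lemma mem_listsLe {n : ℕ} {s : Finset (Finset ℕ)} :
    γ ∈ listsLe n s ↔ γ.length ≤ n ∧ ∀ B ∈ γ, B ∈ s := by
  induction n generalizing γ with
  | zero =>
      simp only [listsLe, Finset.mem_singleton]
      constructor
      · rintro rfl; simp
      · rintro ⟨h1, -⟩
        exact List.length_eq_zero_iff.1 (Nat.le_zero.1 h1)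
  | succ n ih =>
      simp only [listsLe, Finset.mem_union, Finset.mem_singleton, Finset.mem_image,
        Finset.mem_product]
      cases γ with
      | nil => simp
      | cons B δ =>
          constructor
          · rintro (h | ⟨⟨C, ε⟩, ⟨hC, hε⟩, heq⟩)
            · simp at h
            · obtain ⟨rfl, rfl⟩ : C = B ∧ ε = δ := by
                constructor <;> [exact (List.cons.injEq _ _ _ _ ▸ heq).1;
                  exact (List.cons.injEq _ _ _ _ ▸ heq).2]
              obtain ⟨h1, h2⟩ := ih.1 hε
              refine ⟨by simpa using h1, ?_⟩
              intro E hE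
              rcases List.mem_cons.1 hE with rfl | hE
              · exact hC
              · exact h2 E hE
          · rintro ⟨h1, h2⟩
            right
            refine ⟨⟨B, δ⟩, ⟨h2 B (List.mem_cons_self), ih.2 ⟨by simpa using h1,
              fun E hE => h2 E (List.mem_cons_of_mem _ hE)⟩⟩, rfl⟩

open Classical in
/-- The finset of all set compositions of `S`. -/
noncomputable def GammaF (S : Finset ℕ) : Finset SComp :=
  (listsLe S.card S.powerset).filter fun γ => IsSCompOf γ S

lemma mem_GammaF : γ ∈ GammaF S ↔ IsSCompOf γ S := by
  classical
  rw [GammaF]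
  constructor
  · intro h
    exact (Finset.mem_filter.1 h).2
  · intro h
    refine Finset.mem_filter.2 ⟨mem_listsLe.2 ⟨h.length_le, fun B hB => ?_⟩, h⟩
    exact Finset.mem_powerset.2 (h.2.2 ▸ subset_sunion hB)

lemma GammaF_coe (S : Finset ℕ) : {γ : SComp | IsSCompOf γ S} = ↑(GammaF S) := by
  ext γ
  simp [mem_GammaF]

lemma GammaF_empty : GammaF (∅ : Finset ℕ) = {[]} := by
  ext γ
  rw [mem_GammaF, Finset.mem_singleton]
  constructor
  · intro h
    cases γ with
    | nil => rfl
    | cons g δ =>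
        obtain ⟨hg, hgS, -⟩ := h.cons_elim
        exact absurd (Finset.subset_empty.1 hgS) hg.ne_empty
  · rintro rfl; exact isSCompOf_nil

lemma nil_not_mem_GammaF {m : ℕ} (hm : 1 ≤ m) : [] ∉ GammaF (seg m) := by
  rw [mem_GammaF, isSCompOf_nil_iff, seg_eq_empty_iff]
  omega

end SComps
section Pull

/-- Pull back a subset of `[#K]` to a subset of `K` along the increasing bijection. -/
def pull (K g : Finset ℕ) : Finset ℕ := K.filter fun j => stdFun K j ∈ g

variable {A : Blocks} {K g h S : Finset ℕ} {γ δ : SComp}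

lemma pull_subset : pull K g ⊆ K := Finset.filter_subset _ _

lemma image_stdFun_pull (hg : g ⊆ seg K.card) : (pull K g).image (stdFun K) = g := by
  ext i
  rw [Finset.mem_image]
  constructor
  · rintro ⟨j, hj, rfl⟩
    exact (Finset.mem_filter.1 hj).2
  · intro hi
    have : i ∈ K.image (stdFun K) := by rw [image_stdFun]; exact hg hi
    rw [Finset.mem_image] at this
    obtain ⟨j, hj, rfl⟩ := this
    exact ⟨j, Finset.mem_filter.2 ⟨hj, hi⟩, rfl⟩

lemma pull_image (hh : h ⊆ K) : pull K (h.image (stdFun K)) = h := by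
  ext j
  rw [pull, Finset.mem_filter, Finset.mem_image]
  constructor
  · rintro ⟨hjK, j', hj', heq⟩
    rwa [(stdFun_sMonoOn K).injOn j' (hh hj') j hjK heq] at hj'
  · intro hj
    exact ⟨hh hj, j, hj, rfl⟩

lemma pull_nonempty (hg : g ⊆ seg K.card) (hne : g.Nonempty) : (pull K g).Nonempty := by
  by_contra hc
  rw [Finset.not_nonempty_iff_eq_empty] at hc
  have := image_stdFun_pull hg
  rw [hc, Finset.image_empty] at this
  exact hne.ne_empty this.symm

lemma pull_disjoint {g' : Finset ℕ} (hd : Disjoint g g') : Disjoint (pull K g) (pull K g') := by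
  rw [Finset.disjoint_left]
  intro j hj1 hj2
  exact Finset.disjoint_left.1 hd (Finset.mem_filter.1 hj1).2 (Finset.mem_filter.1 hj2).2

lemma pull_union {g' : Finset ℕ} : pull K (g ∪ g') = pull K g ∪ pull K g' := by
  ext j
  simp only [pull, Finset.mem_filter, Finset.mem_union]
  tauto

lemma pull_seg : pull K (seg K.card) = K := by
  rw [pull, Finset.filter_true_of_mem]
  exact fun j hj => stdFun_mem_seg hj

lemma sunion_map_pull : sunion (γ.map (pull K)) = pull K (sunion γ) := by
  induction γ with
  | nil => simp [sunion_nil, pull]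
  | cons g γ ih => rw [List.map_cons, sunion_cons, sunion_cons, ih, pull_union]

lemma sunion_map_image (f : ℕ → ℕ) :
    sunion (γ.map (fun B => B.image f)) = (sunion γ).image f := by
  induction γ with
  | nil => simp [sunion_nil]
  | cons g γ ih => rw [List.map_cons, sunion_cons, sunion_cons, ih, Finset.image_union]

lemma isSCompOf_map_pull (h : IsSCompOf γ (seg K.card)) : IsSCompOf (γ.map (pull K)) K := by
  refine ⟨?_, ?_, ?_⟩
  · intro B hB
    rw [List.mem_map] at hB
    obtain ⟨g, hg, rfl⟩ := hB
    exact pull_nonempty (h.2.2 ▸ subset_sunion hg) (h.1 g hg)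
  · rw [List.pairwise_map]
    exact h.2.1.imp fun hd => pull_disjoint hd
  · rw [sunion_map_pull, h.2.2, pull_seg]

lemma isSCompOf_map_image (h : IsSCompOf δ K) :
    IsSCompOf (δ.map (fun B => B.image (stdFun K))) (seg K.card) := by
  refine ⟨?_, ?_, ?_⟩
  · intro B hB
    rw [List.mem_map] at hB
    obtain ⟨g, hg, rfl⟩ := hB
    exact (h.1 g hg).image _
  · rw [List.pairwise_map]
    apply List.Pairwise.imp_of_mem ?_ h.2.1
    intro a b ha hb hd
    exact disjoint_image_of (stdFun_sMonoOn K) (h.2.2 ▸ subset_sunion ha)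
      (h.2.2 ▸ subset_sunion hb) hd
  · rw [sunion_map_image, h.2.2, image_stdFun]

lemma map_image_map_pull (h : IsSCompOf γ (seg K.card)) :
    (γ.map (pull K)).map (fun B => B.image (stdFun K)) = γ := by
  rw [List.map_map]
  have : ∀ g ∈ γ, ((fun B => B.image (stdFun K)) ∘ pull K) g = id g := by
    intro g hg
    exact image_stdFun_pull (h.2.2 ▸ subset_sunion hg)
  rw [List.map_congr_left this, List.map_id]

lemma map_pull_map_image (h : IsSCompOf δ K) :
    (δ.map (fun B => B.image (stdFun K))).map (pull K) = δ := by
  rw [List.map_map]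
  have : ∀ g ∈ δ, (pull K ∘ fun B => B.image (stdFun K)) g = id g := by
    intro g hg
    exact pull_image (h.2.2 ▸ subset_sunion hg)
  rw [List.map_congr_left this, List.map_id]

end Pull

section Key

variable {A : Blocks} {K g : Finset ℕ} {γ : SComp}

lemma stdP_subColl_subColl (h : IsPart A) (hK : K ⊆ seg A.card) (hg : g ⊆ seg K.card) :
    stdP (subColl (stdP (subColl A K)) g) = stdP (subColl A (pull K g)) := by
  set P := subColl A K with hP_def
  have hP : IsPart P := isPart_subColl h hK
  have hcard : P.card = K.card := card_subColl h hK
  have hgP : g ⊆ seg P.card := by rw [hcard]; exact hg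
  have h1 : subColl (stdP P) g = mapB (stdFun (ground P)) (subColl P g) := by
    rw [subColl_def, subColl_def, mapB, Finset.image_image]
    apply Finset.image_congr
    intro i hi
    exact blockAt_stdP hP (hgP hi)
  have h2 : subColl A (pull K g) = subColl P g := by
    rw [subColl_def A]
    have heq : ∀ j ∈ pull K g, blockAt A j = blockAt P (stdFun K j) := by
      intro j hj
      exact (blockAt_subColl h hK (pull_subset hj)).symm
    rw [Finset.image_congr heq,
      show (fun x => blockAt P (stdFun K x)) = blockAt P ∘ stdFun K from rfl,
      ← Finset.image_image, image_stdFun_pull hg, subColl_def]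
  rw [h1, h2]
  exact stdP_mapB (isPart_subColl hP hgP)
    ((stdFun_sMonoOn (ground P)).mono (ground_subColl_subset hP hgP))

lemma applyComp_eq_foldr (γ : SComp) (A : Blocks) :
    applyComp γ A = (γ.map fun g => stdP (subColl A g)).foldr concatP ∅ := rfl

lemma applyComp_stdP_subColl (h : IsPart A) (hK : K ⊆ seg A.card)
    (hγ : ∀ g ∈ γ, g ⊆ seg K.card) :
    applyComp γ (stdP (subColl A K)) = applyComp (γ.map (pull K)) A := by
  rw [applyComp_eq_foldr, applyComp_eq_foldr, List.map_map]
  congr 1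
  apply List.map_congr_left
  intro g hg
  exact stdP_subColl_subColl h hK (hγ g hg)

end Key
section Lin

open TensorProduct

lemma SmapB_eq (A : Blocks) :
    SmapB A = ∑ γ ∈ GammaF (seg A.card), ((-1 : ℚ) ^ γ.length) • bas (applyComp γ A) := by
  rw [SmapB, GammaF_coe, finsum_mem_coe_finset]

lemma Smap_bas (A : Blocks) : Smap (bas A) = SmapB A := by
  rw [Smap, bas, Finsupp.lsum_single, LinearMap.toSpanSingleton_apply, one_smul]

lemma Delta_bas (A : Blocks) : Delta (bas A) = deltaB A := by
  rw [Delta, bas, Finsupp.lsum_single, LinearMap.toSpanSingleton_apply, one_smul]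

lemma mulLin_bas (A B : Blocks) : mulLin (bas A) (bas B) = bas (concatP A B) := by
  rw [mulLin]
  conv_lhs => rw [bas, Finsupp.lsum_single, LinearMap.toSpanSingleton_apply, one_smul]
  rw [bas, Finsupp.lsum_single, LinearMap.toSpanSingleton_apply, one_smul]

lemma epsLin_bas_empty : epsLin (bas (∅ : Blocks)) = 1 := by
  rw [epsLin, bas, Finsupp.lsum_single, if_pos rfl]
  rfl

lemma epsLin_bas_ne {A : Blocks} (h : A ≠ ∅) : epsLin (bas A) = 0 := by
  rw [epsLin, bas, Finsupp.lsum_single, if_neg h]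
  rfl

lemma etaLin_one : etaLin (1 : ℚ) = bas (∅ : Blocks) := by
  rw [etaLin, LinearMap.toSpanSingleton_apply, one_smul]

lemma mLin_tmul (x y : NCSym) : mLin (x ⊗ₜ[ℚ] y) = mulLin x y := rfl

end Lin
section Expand

open TensorProduct

variable {A : Blocks}

lemma applyComp_empty_cons (δ : SComp) (A : Blocks) :
    applyComp (∅ :: δ) A = applyComp δ A := by
  rw [applyComp_cons, subColl_empty, stdP_empty, empty_concatP]

lemma expand2 (h : IsPart A) :
    mLin ((TensorProduct.map LinearMap.id Smap) (Delta (bas A))) =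
    ∑ K ∈ (seg A.card).powerset, ∑ δ ∈ GammaF (seg A.card \ K),
      ((-1 : ℚ) ^ δ.length) • bas (applyComp (K :: δ) A) := by
  rw [Delta_bas, deltaB, map_sum, map_sum]
  apply Finset.sum_congr rfl
  intro K hK
  have hKs : K ⊆ seg A.card := Finset.mem_powerset.1 hK
  have hLs : seg A.card \ K ⊆ seg A.card := Finset.sdiff_subset
  rw [TensorProduct.map_tmul, LinearMap.id_coe, id_eq, mLin_tmul, Smap_bas, SmapB_eq]
  have hYcard : (stdP (subColl A (seg A.card \ K))).card = (seg A.card \ K).card := by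
    rw [card_stdP (isPart_subColl h hLs), card_subColl h hLs]
  rw [hYcard, map_sum]
  refine Finset.sum_nbij' (fun γ => γ.map (pull (seg A.card \ K)))
    (fun δ => δ.map (fun B => B.image (stdFun (seg A.card \ K)))) ?_ ?_ ?_ ?_ ?_
  · intro γ hγ
    exact mem_GammaF.2 (isSCompOf_map_pull (mem_GammaF.1 hγ))
  · intro δ hδ
    rw [mem_GammaF]
    have := isSCompOf_map_image (mem_GammaF.1 hδ)
    rwa [Finset.card_sdiff_of_subset hKs, card_seg] at this ⊢
  · intro γ hγ
    exact map_image_map_pull (mem_GammaF.1 hγ)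
  · intro δ hδ
    exact map_pull_map_image (mem_GammaF.1 hδ)
  · intro γ hγ
    have hsc := mem_GammaF.1 hγ
    rw [map_smul, mulLin_bas, List.length_map, applyComp_cons,
      applyComp_stdP_subColl h hLs (fun g hg => hsc.2.2 ▸ subset_sunion hg)]

end Expand
section AppendComp

variable {δ : SComp} {L S K : Finset ℕ} {A : Blocks}

lemma IsSCompOf.concat_elim (h : IsSCompOf (δ ++ [L]) S) :
    L.Nonempty ∧ L ⊆ S ∧ IsSCompOf δ (S \ L) := by
  have hLne : L.Nonempty := h.1 L (List.mem_append.2 (Or.inr (List.mem_singleton.2 rfl)))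
  have hpw := h.2.1
  rw [List.pairwise_append] at hpw
  obtain ⟨pδ, pL, cross⟩ := hpw
  have hdisj : Disjoint (sunion δ) L := by
    apply (disjoint_sunion ?_).symm
    intro C hC
    exact (cross C hC L (List.mem_singleton.2 rfl)).symm
  have hsu : sunion δ ∪ L = S := by
    have := h.2.2
    rwa [sunion_append, sunion_cons, sunion_nil, Finset.union_empty] at this
  have hLS : L ⊆ S := by rw [← hsu]; exact Finset.subset_union_right
  have hδsu : sunion δ = S \ L := by
    rw [← hsu, Finset.union_sdiff_cancel_right hdisj]
  exact ⟨hLne, hLS, fun B hB => h.1 B (List.mem_append.2 (Or.inl hB)), pδ, hδsu⟩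

lemma isSCompOf_concat_intro (hδ : IsSCompOf δ (S \ L)) (hL : L.Nonempty) (hLS : L ⊆ S) :
    IsSCompOf (δ ++ [L]) S := by
  refine ⟨?_, ?_, ?_⟩
  · intro B hB
    rcases List.mem_append.1 hB with hB | hB
    · exact hδ.1 B hB
    · rw [List.mem_singleton.1 hB]; exact hL
  · rw [List.pairwise_append]
    refine ⟨hδ.2.1, List.pairwise_singleton _ _, ?_⟩
    intro a ha b hb
    rw [List.mem_singleton.1 hb]
    have haS : a ⊆ S \ L := hδ.2.2 ▸ subset_sunion ha
    exact Finset.disjoint_of_subset_left haS Finset.sdiff_disjoint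
  · rw [sunion_append, sunion_cons, sunion_nil, Finset.union_empty, hδ.2.2,
      Finset.sdiff_union_of_subset hLS]

lemma sdiff_nonempty_of_ne (hKs : K ⊆ seg S.card) : True := trivial

end AppendComp

section Expand1

open TensorProduct

variable {A : Blocks}

lemma expand1 (h : IsPart A) :
    mLin ((TensorProduct.map Smap LinearMap.id) (Delta (bas A))) =
    ∑ K ∈ (seg A.card).powerset, ∑ δ ∈ GammaF K,
      ((-1 : ℚ) ^ δ.length) •
        bas (concatP (applyComp δ A) (stdP (subColl A (seg A.card \ K)))) := by
  rw [Delta_bas, deltaB, map_sum, map_sum]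
  apply Finset.sum_congr rfl
  intro K hK
  have hKs : K ⊆ seg A.card := Finset.mem_powerset.1 hK
  rw [TensorProduct.map_tmul, LinearMap.id_coe, id_eq, Smap_bas, SmapB_eq]
  have hXcard : (stdP (subColl A K)).card = K.card := by
    rw [card_stdP (isPart_subColl h hKs), card_subColl h hKs]
  rw [hXcard, TensorProduct.sum_tmul, map_sum]
  refine Finset.sum_nbij' (fun γ => γ.map (pull K))
    (fun δ => δ.map (fun B => B.image (stdFun K))) ?_ ?_ ?_ ?_ ?_
  · intro γ hγ
    exact mem_GammaF.2 (isSCompOf_map_pull (mem_GammaF.1 hγ))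
  · intro δ hδ
    exact mem_GammaF.2 (isSCompOf_map_image (mem_GammaF.1 hδ))
  · intro γ hγ
    exact map_image_map_pull (mem_GammaF.1 hγ)
  · intro δ hδ
    exact map_pull_map_image (mem_GammaF.1 hδ)
  · intro γ hγ
    have hsc := mem_GammaF.1 hγ
    rw [← TensorProduct.smul_tmul', map_smul, mLin_tmul, mulLin_bas, List.length_map,
      applyComp_stdP_subColl h hKs (fun g hg => hsc.2.2 ▸ subset_sunion hg)]

end Expand1
section Final

open TensorProduct

variable {A : Blocks}

lemma rhs_eq (A : Blocks) :
    etaLin (epsLin (bas A)) = if A = ∅ then bas (∅ : Blocks) else 0 := by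
  by_cases hA0 : A = ∅
  · rw [if_pos hA0, hA0, epsLin_bas_empty, etaLin_one]
  · rw [if_neg hA0, epsLin_bas_ne hA0, map_zero]

lemma side2 (h : IsPart A) :
    mLin ((TensorProduct.map LinearMap.id Smap) (Delta (bas A))) = etaLin (epsLin (bas A)) := by
  rw [expand2 h, rhs_eq]
  rw [← Finset.add_sum_erase _ _ (Finset.empty_mem_powerset (seg A.card))]
  have hT0 : ∑ δ ∈ GammaF (seg A.card \ ∅), ((-1:ℚ) ^ δ.length) • bas (applyComp (∅ :: δ) A)
      = ∑ ε ∈ GammaF (seg A.card), ((-1:ℚ) ^ ε.length) • bas (applyComp ε A) := by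
    rw [Finset.sdiff_empty]
    exact Finset.sum_congr rfl fun δ _ => by rw [applyComp_empty_cons]
  have hrest : ∑ K ∈ ((seg A.card).powerset).erase ∅, ∑ δ ∈ GammaF (seg A.card \ K),
      ((-1:ℚ) ^ δ.length) • bas (applyComp (K :: δ) A)
      = ∑ ε ∈ (GammaF (seg A.card)).erase [],
          -(((-1:ℚ) ^ ε.length) • bas (applyComp ε A)) := by
    rw [Finset.sum_sigma']
    refine Finset.sum_nbij' (fun p => p.1 :: p.2) (fun ε => ⟨ε.headI, ε.tail⟩) ?_ ?_ ?_ ?_ ?_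
    · rintro ⟨K, δ⟩ hp
      rw [Finset.mem_sigma] at hp
      obtain ⟨hK, hδ⟩ := hp
      rw [Finset.mem_erase] at hK
      rw [Finset.mem_erase]
      refine ⟨by simp, mem_GammaF.2 ?_⟩
      exact (mem_GammaF.1 hδ).cons_intro (Finset.nonempty_iff_ne_empty.2 hK.1)
        (Finset.mem_powerset.1 hK.2)
    · intro ε hε
      rw [Finset.mem_erase] at hε
      obtain ⟨hne, hmem⟩ := hε
      cases ε with
      | nil => exact absurd rfl hne
      | cons g δ =>
          obtain ⟨hg, hgS, hδ⟩ := (mem_GammaF.1 hmem).cons_elim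
          rw [Finset.mem_sigma]
          exact ⟨Finset.mem_erase.2 ⟨hg.ne_empty, Finset.mem_powerset.2 hgS⟩, mem_GammaF.2 hδ⟩
    · rintro ⟨K, δ⟩ hp
      rfl
    · intro ε hε
      rw [Finset.mem_erase] at hε
      cases ε with
      | nil => exact absurd rfl hε.1
      | cons g δ => rfl
    · rintro ⟨K, δ⟩ hp
      rw [List.length_cons, pow_succ, mul_neg_one, neg_smul, neg_neg]
  rw [hT0, hrest, Finset.sum_neg_distrib]
  by_cases hA0 : A = ∅
  · rw [if_pos hA0]
    subst hA0
    rw [Finset.card_empty, seg_zero, GammaF_empty, Finset.erase_singleton, Finset.sum_empty,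
      neg_zero, add_zero, Finset.sum_singleton, List.length_nil, pow_zero, one_smul,
      applyComp_nil]
  · rw [if_neg hA0]
    have hr : 1 ≤ A.card := Finset.card_pos.2 (Finset.nonempty_iff_ne_empty.2 hA0)
    rw [Finset.erase_eq_of_notMem (nil_not_mem_GammaF hr)]
    exact add_neg_cancel _

lemma side1 (h : IsPart A) :
    mLin ((TensorProduct.map Smap LinearMap.id) (Delta (bas A))) = etaLin (epsLin (bas A)) := by
  rw [expand1 h, rhs_eq]
  rw [← Finset.add_sum_erase _ _ (Finset.mem_powerset_self (seg A.card))]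
  have hT0 : ∑ δ ∈ GammaF (seg A.card), ((-1:ℚ) ^ δ.length) •
        bas (concatP (applyComp δ A) (stdP (subColl A (seg A.card \ seg A.card))))
      = ∑ ε ∈ GammaF (seg A.card), ((-1:ℚ) ^ ε.length) • bas (applyComp ε A) := by
    apply Finset.sum_congr rfl
    intro δ _
    rw [Finset.sdiff_self, subColl_empty, stdP_empty, concatP_empty]
  have hrest : ∑ K ∈ ((seg A.card).powerset).erase (seg A.card), ∑ δ ∈ GammaF K,
      ((-1:ℚ) ^ δ.length) • bas (concatP (applyComp δ A) (stdP (subColl A (seg A.card \ K))))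
      = ∑ ε ∈ (GammaF (seg A.card)).erase [],
          -(((-1:ℚ) ^ ε.length) • bas (applyComp ε A)) := by
    rw [Finset.sum_sigma']
    refine Finset.sum_nbij' (fun p => p.2 ++ [seg A.card \ p.1])
      (fun ε => ⟨seg A.card \ (ε.getLast?.getD ∅), ε.dropLast⟩) ?_ ?_ ?_ ?_ ?_
    · rintro ⟨K, δ⟩ hp
      rw [Finset.mem_sigma] at hp
      obtain ⟨hK, hδ⟩ := hp
      rw [Finset.mem_erase] at hK
      have hKs := Finset.mem_powerset.1 hK.2
      have hLne : (seg A.card \ K).Nonempty :=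
        Finset.sdiff_nonempty.2 fun hsub => hK.1 (Finset.Subset.antisymm hKs hsub)
      rw [Finset.mem_erase]
      refine ⟨by simp, mem_GammaF.2 ?_⟩
      apply isSCompOf_concat_intro ?_ hLne Finset.sdiff_subset
      rw [Finset.sdiff_sdiff_eq_self hKs]
      exact mem_GammaF.1 hδ
    · intro ε hε
      rw [Finset.mem_erase] at hε
      obtain ⟨hne, hmem⟩ := hε
      rcases List.eq_nil_or_concat ε with rfl | ⟨δ, L, hεeq⟩
      · exact absurd rfl hne
      rw [List.concat_eq_append] at hεeq
      subst hεeq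
      · obtain ⟨hLne, hLS, hδ⟩ := (mem_GammaF.1 hmem).concat_elim
        rw [Finset.mem_sigma]
        constructor
        · rw [Finset.mem_erase]
          refine ⟨?_, Finset.mem_powerset.2 Finset.sdiff_subset⟩
          intro hcontra
          obtain ⟨x, hx⟩ := hLne
          have hx1 : x ∈ seg A.card := hLS hx
          rw [List.getLast?_concat, Option.getD_some] at hcontra
          rw [← hcontra, Finset.mem_sdiff] at hx1
          exact hx1.2 hx
        · rw [List.getLast?_concat, Option.getD_some, List.dropLast_concat]
          exact mem_GammaF.2 hδ
    · rintro ⟨K, δ⟩ hp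
      rw [Finset.mem_sigma] at hp
      have hKs := Finset.mem_powerset.1 (Finset.mem_erase.1 hp.1).2
      simp only [List.getLast?_concat, Option.getD_some, List.dropLast_concat]
      rw [Finset.sdiff_sdiff_eq_self hKs]
    · intro ε hε
      rcases List.eq_nil_or_concat ε with rfl | ⟨δ, L, hεeq⟩
      · exact absurd rfl (Finset.mem_erase.1 hε).1
      rw [List.concat_eq_append] at hεeq
      subst hεeq
      · obtain ⟨hLne, hLS, hδ⟩ := (mem_GammaF.1 (Finset.mem_erase.1 hε).2).concat_elim
        simp only [List.getLast?_concat, Option.getD_some, List.dropLast_concat]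
        rw [Finset.sdiff_sdiff_eq_self hLS]
    · rintro ⟨K, δ⟩ hp
      rw [Finset.mem_sigma] at hp
      have hK := Finset.mem_erase.1 hp.1
      have hKs := Finset.mem_powerset.1 hK.2
      have hδ := mem_GammaF.1 hp.2
      rw [applyComp_append h (fun g hg => (hδ.2.2 ▸ subset_sunion hg).trans hKs)
        Finset.sdiff_subset, List.length_append, List.length_singleton, pow_succ,
        mul_neg_one, neg_smul, neg_neg]
  rw [hT0, hrest, Finset.sum_neg_distrib]
  by_cases hA0 : A = ∅
  · rw [if_pos hA0]
    subst hA0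
    rw [Finset.card_empty, seg_zero, GammaF_empty, Finset.erase_singleton, Finset.sum_empty,
      neg_zero, add_zero, Finset.sum_singleton, List.length_nil, pow_zero, one_smul,
      applyComp_nil]
  · rw [if_neg hA0]
    have hr : 1 ≤ A.card := Finset.card_pos.2 (Finset.nonempty_iff_ne_empty.2 hA0)
    rw [Finset.erase_eq_of_notMem (nil_not_mem_GammaF hr)]
    exact add_neg_cancel _

end Final

/-- The map `S(A) = ∑_{γ ∈ Γ(r)} (-1)^{ℓ(γ)} γ[A]` is the antipode of `NCSym`:
`m ∘ (S ⊗ id) ∘ Δ = η ∘ ε = m ∘ (id ⊗ S) ∘ Δ` on (the span of) the set partitions. -/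
theorem ncsym_antipode (n : ℕ) (A : Blocks) (hA : IsSP A n) :
    mLin ((TensorProduct.map Smap LinearMap.id) (Delta (bas A))) = etaLin (epsLin (bas A)) ∧
    mLin ((TensorProduct.map LinearMap.id Smap) (Delta (bas A))) = etaLin (epsLin (bas A)) := by
  exact ⟨side1 hA.isPart, side2 hA.isPart⟩
end

section
/- Let A and B be Hopf algebras and C a coalgebra over a field k, and let θ : B ⊗ C → A be a surjective k-linear map that is a morphism of coalgebras (where B ⊗ C carries the tensor product coalgebra structure) and measures B to A. Let ι : A → B ⊗ C be any k-linear section of θ, i.e., θ ∘ ι = id_A. Then the antipodes satisfy S_A = θ ∘ (S_B ⊗ id_C) ∘ ι. -/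
open scoped TensorProduct

open scoped Coalgebra

section Aux

variable {k : Type*} [Field k] {A B C : Type*}
    [Semiring A] [HopfAlgebra k A] [Semiring B] [HopfAlgebra k B]
    [AddCommMonoid C] [Module k C] [Coalgebra k C]

open TensorProduct LinearMap Coalgebra

/-- Scalar form of the left counit law. -/
lemma sum_counit_smul_eq' {M : Type*} [AddCommMonoid M] [Module k M] [Coalgebra k M]
    {a : M} {ι : Type*} (r : Coalgebra.Repr k a ι) :
    ∑ i ∈ r.index, Coalgebra.counit (R := k) (r.left i) • r.right i = a := by
  have := congrArg (TensorProduct.lid k M) (Coalgebra.sum_counit_tmul_eq r)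
  rw [map_sum] at this
  simp only [TensorProduct.lid_tmul] at this
  rwa [one_smul] at this

/-- Scalar form of the right counit law. -/
lemma sum_smul_counit_eq' {M : Type*} [AddCommMonoid M] [Module k M] [Coalgebra k M]
    {a : M} {ι : Type*} (r : Coalgebra.Repr k a ι) :
    ∑ i ∈ r.index, Coalgebra.counit (R := k) (r.right i) • r.left i = a := by
  have := congrArg (TensorProduct.rid k M) (Coalgebra.sum_tmul_counit_eq r)
  rw [map_sum] at this
  simp only [TensorProduct.rid_tmul] at this
  rwa [one_smul] at this

/-- Comultiplication of a pure tensor in `B ⊗ C`, in terms of chosen representations. -/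
lemma comul_tmul_repr {ι κ : Type*} (b : B) (c : C) (rb : Coalgebra.Repr k b ι) (rc : Coalgebra.Repr k c κ) :
    Coalgebra.comul (R := k) (b ⊗ₜ[k] c) =
      ∑ i ∈ rb.index, ∑ j ∈ rc.index,
        (rb.left i ⊗ₜ[k] rc.left j) ⊗ₜ[k] (rb.right i ⊗ₜ[k] rc.right j) := by
  have : Coalgebra.comul (R := k) (b ⊗ₜ[k] c) =
      TensorProduct.tensorTensorTensorComm k B B C C
        ((CoalgebraStruct.comul b) ⊗ₜ[k] (CoalgebraStruct.comul c)) := rfl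
  rw [this, ← rb.eq, ← rc.eq]
  simp only [TensorProduct.sum_tmul, TensorProduct.tmul_sum, map_sum,
    TensorProduct.tensorTensorTensorComm_tmul]
  exact Finset.sum_comm ..


/-- Convolution product on linear maps `B ⊗ C → A`. -/
noncomputable def convol (f g : (B ⊗[k] C) →ₗ[k] A) : (B ⊗[k] C) →ₗ[k] A :=
  LinearMap.mul' k A ∘ₗ TensorProduct.map f g ∘ₗ Coalgebra.comul

lemma convol_tmul {ι κ : Type*} (f g : (B ⊗[k] C) →ₗ[k] A) (b : B) (c : C)
    (rb : Coalgebra.Repr k b ι) (rc : Coalgebra.Repr k c κ) :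
    convol f g (b ⊗ₜ[k] c) =
      ∑ i ∈ rb.index, ∑ j ∈ rc.index,
        f (rb.left i ⊗ₜ[k] rc.left j) * g (rb.right i ⊗ₜ[k] rc.right j) := by
  have h := comul_tmul_repr b c rb rc
  simp only [convol, LinearMap.comp_apply, h, map_sum, TensorProduct.map_tmul,
    LinearMap.mul'_apply]

/-- The convolution unit. -/
noncomputable def cunit : (B ⊗[k] C) →ₗ[k] A :=
  Algebra.linearMap k A ∘ₗ Coalgebra.counit

lemma cunit_tmul (b : B) (c : C) :
    (cunit : (B ⊗[k] C) →ₗ[k] A) (b ⊗ₜ[k] c)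
      = algebraMap k A (Coalgebra.counit (R := k) b * Coalgebra.counit (R := k) c) := by
  rw [mul_comm]; rfl

lemma convol_cunit_left (f : (B ⊗[k] C) →ₗ[k] A) : convol cunit f = f := by
  apply TensorProduct.ext'
  intro b c
  rw [convol_tmul _ _ b c (ℛ k b) (ℛ k c)]
  calc ∑ i ∈ (ℛ k b).index, ∑ j ∈ (ℛ k c).index,
        (cunit : (B ⊗[k] C) →ₗ[k] A) ((ℛ k b).left i ⊗ₜ[k] (ℛ k c).left j)
          * f ((ℛ k b).right i ⊗ₜ[k] (ℛ k c).right j)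
      = ∑ i ∈ (ℛ k b).index, ∑ j ∈ (ℛ k c).index,
          f ((Coalgebra.counit (R := k) ((ℛ k b).left i) • (ℛ k b).right i) ⊗ₜ[k]
             (Coalgebra.counit (R := k) ((ℛ k c).left j) • (ℛ k c).right j)) := by
        refine Finset.sum_congr rfl fun i _ => Finset.sum_congr rfl fun j _ => ?_
        rw [cunit_tmul, ← Algebra.smul_def]
        simp [← smul_tmul', tmul_smul, smul_smul, mul_comm]
    _ = f (b ⊗ₜ[k] c) := by
        simp only [← map_sum]
        congr 1
        conv_rhs => rw [← sum_counit_smul_eq' (ℛ k b), ← sum_counit_smul_eq' (ℛ k c)]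
        simp only [TensorProduct.sum_tmul, TensorProduct.tmul_sum, Finset.smul_sum, tmul_smul]
        exact Finset.sum_comm ..


lemma convol_cunit_right (f : (B ⊗[k] C) →ₗ[k] A) : convol f cunit = f := by
  apply TensorProduct.ext'
  intro b c
  rw [convol_tmul _ _ b c (ℛ k b) (ℛ k c)]
  calc ∑ i ∈ (ℛ k b).index, ∑ j ∈ (ℛ k c).index,
        f ((ℛ k b).left i ⊗ₜ[k] (ℛ k c).left j)
          * (cunit : (B ⊗[k] C) →ₗ[k] A) ((ℛ k b).right i ⊗ₜ[k] (ℛ k c).right j)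
      = ∑ i ∈ (ℛ k b).index, ∑ j ∈ (ℛ k c).index,
          f ((Coalgebra.counit (R := k) ((ℛ k b).right i) • (ℛ k b).left i) ⊗ₜ[k]
             (Coalgebra.counit (R := k) ((ℛ k c).right j) • (ℛ k c).left j)) := by
        refine Finset.sum_congr rfl fun i _ => Finset.sum_congr rfl fun j _ => ?_
        rw [cunit_tmul, ← Algebra.commutes, ← Algebra.smul_def]
        simp [← smul_tmul', tmul_smul, smul_smul, mul_comm]
    _ = f (b ⊗ₜ[k] c) := by
        simp only [← map_sum]
        congr 1
        conv_rhs => rw [← sum_smul_counit_eq' (ℛ k b), ← sum_smul_counit_eq' (ℛ k c)]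
        simp only [TensorProduct.sum_tmul, TensorProduct.tmul_sum, Finset.smul_sum, tmul_smul]
        exact Finset.sum_comm ..


end Aux

section Aux2

variable {k : Type*} [Field k] {A B C : Type*}
    [Semiring A] [HopfAlgebra k A] [Semiring B] [HopfAlgebra k B]
    [AddCommMonoid C] [Module k C] [Coalgebra k C]

open TensorProduct LinearMap Coalgebra

/-- Trilinear gadget, `B`-variables packaged as a tensor. -/
noncomputable def triB (f g h : (B ⊗[k] C) →ₗ[k] A) (c₁ c₂ c₃ : C) :
    B ⊗[k] (B ⊗[k] B) →ₗ[k] A :=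
  LinearMap.mul' k A ∘ₗ TensorProduct.map (f ∘ₗ (TensorProduct.mk k B C).flip c₁)
    (LinearMap.mul' k A ∘ₗ TensorProduct.map (g ∘ₗ (TensorProduct.mk k B C).flip c₂)
      (h ∘ₗ (TensorProduct.mk k B C).flip c₃))

@[simp] lemma triB_apply (f g h : (B ⊗[k] C) →ₗ[k] A) (c₁ c₂ c₃ : C) (x y z : B) :
    triB f g h c₁ c₂ c₃ (x ⊗ₜ[k] (y ⊗ₜ[k] z))
      = f (x ⊗ₜ[k] c₁) * (g (y ⊗ₜ[k] c₂) * h (z ⊗ₜ[k] c₃)) := by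
  simp [triB]

/-- Trilinear gadget, `C`-variables packaged as a tensor. -/
noncomputable def triC (f g h : (B ⊗[k] C) →ₗ[k] A) (b₁ b₂ b₃ : B) :
    C ⊗[k] (C ⊗[k] C) →ₗ[k] A :=
  LinearMap.mul' k A ∘ₗ TensorProduct.map (f ∘ₗ TensorProduct.mk k B C b₁)
    (LinearMap.mul' k A ∘ₗ TensorProduct.map (g ∘ₗ TensorProduct.mk k B C b₂)
      (h ∘ₗ TensorProduct.mk k B C b₃))

@[simp] lemma triC_apply (f g h : (B ⊗[k] C) →ₗ[k] A) (b₁ b₂ b₃ : B) (x y z : C) :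
    triC f g h b₁ b₂ b₃ (x ⊗ₜ[k] (y ⊗ₜ[k] z))
      = f (b₁ ⊗ₜ[k] x) * (g (b₂ ⊗ₜ[k] y) * h (b₃ ⊗ₜ[k] z)) := by
  simp [triC]

lemma convol_assoc (f g h : (B ⊗[k] C) →ₗ[k] A) :
    convol (convol f g) h = convol f (convol g h) := by
  apply TensorProduct.ext'
  intro b c
  set rb := ℛ k b with hrb
  set rc := ℛ k c with hrc
  rw [convol_tmul (convol f g) h b c rb rc, convol_tmul f (convol g h) b c rb rc]
  set Φ : B ⊗[k] (B ⊗[k] B) →ₗ[k] A :=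
    ∑ j ∈ rc.index, ∑ q ∈ (ℛ k (rc.right j)).index,
      triB f g h (rc.left j) ((ℛ k (rc.right j)).left q) ((ℛ k (rc.right j)).right q) with hΦ
  calc
    ∑ i ∈ rb.index, ∑ j ∈ rc.index,
        convol f g (rb.left i ⊗ₜ[k] rc.left j) * h (rb.right i ⊗ₜ[k] rc.right j)
      = ∑ i ∈ rb.index, ∑ p ∈ (ℛ k (rb.left i)).index,
          triC f g h ((ℛ k (rb.left i)).left p) ((ℛ k (rb.left i)).right p) (rb.right i)
            (∑ j ∈ rc.index, ∑ q ∈ (ℛ k (rc.left j)).index,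
              ((ℛ k (rc.left j)).left q ⊗ₜ[k] ((ℛ k (rc.left j)).right q ⊗ₜ[k] rc.right j))) := by
        refine Finset.sum_congr rfl fun i _ => ?_
        simp only [map_sum, triC_apply]
        conv_rhs => rw [Finset.sum_comm]
        refine Finset.sum_congr rfl fun j _ => ?_
        rw [convol_tmul f g _ _ (ℛ k (rb.left i)) (ℛ k (rc.left j)), Finset.sum_mul]
        refine Finset.sum_congr rfl fun p _ => ?_
        rw [Finset.sum_mul]
        exact Finset.sum_congr rfl fun q _ => mul_assoc _ _ _
    _ = ∑ i ∈ rb.index, ∑ p ∈ (ℛ k (rb.left i)).index,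
          triC f g h ((ℛ k (rb.left i)).left p) ((ℛ k (rb.left i)).right p) (rb.right i)
            (∑ j ∈ rc.index, ∑ q ∈ (ℛ k (rc.right j)).index,
              (rc.left j ⊗ₜ[k] ((ℛ k (rc.right j)).left q ⊗ₜ[k] (ℛ k (rc.right j)).right q))) := by
        refine Finset.sum_congr rfl fun i _ => Finset.sum_congr rfl fun p _ => ?_
        congr 1
        exact Coalgebra.sum_tmul_tmul_eq rc (fun j => ℛ k (rc.left j)) (fun j => ℛ k (rc.right j))
    _ = Φ (∑ i ∈ rb.index, ∑ p ∈ (ℛ k (rb.left i)).index,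
            ((ℛ k (rb.left i)).left p ⊗ₜ[k] ((ℛ k (rb.left i)).right p ⊗ₜ[k] rb.right i))) := by
        simp only [hΦ, map_sum, LinearMap.sum_apply, triB_apply, triC_apply]
    _ = Φ (∑ i ∈ rb.index, ∑ p ∈ (ℛ k (rb.right i)).index,
            (rb.left i ⊗ₜ[k] ((ℛ k (rb.right i)).left p ⊗ₜ[k] (ℛ k (rb.right i)).right p))) := by
        congr 1
        exact Coalgebra.sum_tmul_tmul_eq rb (fun i => ℛ k (rb.left i)) (fun i => ℛ k (rb.right i))
    _ = ∑ i ∈ rb.index, ∑ j ∈ rc.index,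
          f (rb.left i ⊗ₜ[k] rc.left j) * convol g h (rb.right i ⊗ₜ[k] rc.right j) := by
        simp only [hΦ, map_sum, LinearMap.sum_apply, triB_apply]
        refine Finset.sum_congr rfl fun i _ => ?_
        rw [Finset.sum_comm]
        refine Finset.sum_congr rfl fun j _ => ?_
        rw [convol_tmul g h _ _ (ℛ k (rb.right i)) (ℛ k (rc.right j)), Finset.mul_sum]
        refine Finset.sum_congr rfl fun p _ => ?_
        rw [Finset.mul_sum]

end Aux2

section Aux3

variable {k : Type*} [Field k] {A B C : Type*}
    [Semiring A] [HopfAlgebra k A] [Semiring B] [HopfAlgebra k B]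
    [AddCommMonoid C] [Module k C] [Coalgebra k C]

open TensorProduct LinearMap Coalgebra

lemma convol_S_theta (θ : (B ⊗[k] C) →ₗ[k] A)
    (hθcomul : Coalgebra.comul ∘ₗ θ = (TensorProduct.map θ θ) ∘ₗ Coalgebra.comul)
    (hθcounit : Coalgebra.counit ∘ₗ θ = (Coalgebra.counit : (B ⊗[k] C) →ₗ[k] k)) :
    convol ((HopfAlgebra.antipode k : A →ₗ[k] A) ∘ₗ θ) θ = cunit := by
  apply LinearMap.ext
  intro x
  have h1 : TensorProduct.map ((HopfAlgebra.antipode k : A →ₗ[k] A) ∘ₗ θ) θ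
      = TensorProduct.map (HopfAlgebra.antipode k : A →ₗ[k] A) LinearMap.id
          ∘ₗ TensorProduct.map θ θ := by
    rw [← TensorProduct.map_comp, LinearMap.id_comp]
  have h2 : TensorProduct.map θ θ (Coalgebra.comul x) = Coalgebra.comul (θ x) :=
    (LinearMap.congr_fun hθcomul x).symm
  have h3 : Coalgebra.counit (R := k) (θ x) = Coalgebra.counit (R := k) x :=
    LinearMap.congr_fun hθcounit x
  calc convol ((HopfAlgebra.antipode k : A →ₗ[k] A) ∘ₗ θ) θ x
      = LinearMap.mul' k A (TensorProduct.map (HopfAlgebra.antipode k : A →ₗ[k] A) LinearMap.id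
          (TensorProduct.map θ θ (Coalgebra.comul x))) := by
        simp [convol, h1]
    _ = LinearMap.mul' k A ((HopfAlgebra.antipode k : A →ₗ[k] A).rTensor A
          (Coalgebra.comul (θ x))) := by rw [h2]; rfl
    _ = algebraMap k A (Coalgebra.counit (R := k) (θ x)) :=
        HopfAlgebra.mul_antipode_rTensor_comul_apply (θ x)
    _ = cunit x := by rw [h3]; rfl

lemma convol_T_theta (θ : (B ⊗[k] C) →ₗ[k] A)
    (hθmul : ∀ (b b' : B) (c : C),
      θ ((b * b') ⊗ₜ[k] c) =
        LinearMap.mul' k A ((TensorProduct.map θ θ)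
          (TensorProduct.tensorTensorTensorComm k B B C C
            ((b ⊗ₜ[k] b') ⊗ₜ[k] Coalgebra.comul c))))
    (hθone : ∀ c : C, θ ((1 : B) ⊗ₜ[k] c) = Coalgebra.counit (R := k) c • (1 : A)) :
    convol (θ ∘ₗ TensorProduct.map (HopfAlgebra.antipode k : B →ₗ[k] B) LinearMap.id) θ
      = cunit := by
  apply TensorProduct.ext'
  intro b c
  have key : ∀ x : B ⊗[k] B,
      LinearMap.mul' k A (TensorProduct.map
          (θ ∘ₗ TensorProduct.map (HopfAlgebra.antipode k : B →ₗ[k] B) LinearMap.id) θ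
        (TensorProduct.tensorTensorTensorComm k B B C C (x ⊗ₜ[k] Coalgebra.comul (R := k) c)))
      = θ ((LinearMap.mul' k B
            (TensorProduct.map (HopfAlgebra.antipode k : B →ₗ[k] B) LinearMap.id x)) ⊗ₜ[k] c) := by
    intro x
    induction x using TensorProduct.induction_on with
    | zero => simp
    | tmul b₁ b₂ =>
        have h2 : ∀ y : C ⊗[k] C,
            LinearMap.mul' k A (TensorProduct.map
                (θ ∘ₗ TensorProduct.map (HopfAlgebra.antipode k : B →ₗ[k] B) LinearMap.id) θ
              (TensorProduct.tensorTensorTensorComm k B B C C ((b₁ ⊗ₜ[k] b₂) ⊗ₜ[k] y)))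
            = LinearMap.mul' k A (TensorProduct.map θ θ
              (TensorProduct.tensorTensorTensorComm k B B C C
                (((HopfAlgebra.antipode (R := k) b₁) ⊗ₜ[k] b₂) ⊗ₜ[k] y))) := by
          intro y
          induction y using TensorProduct.induction_on with
          | zero => simp
          | tmul c₁ c₂ => simp
          | add y₁ y₂ hy₁ hy₂ => simp only [TensorProduct.tmul_add, map_add, hy₁, hy₂]
        rw [h2, ← hθmul (HopfAlgebra.antipode (R := k) b₁) b₂ c]
        simp
    | add x₁ x₂ hx₁ hx₂ => simp only [TensorProduct.add_tmul, map_add, hx₁, hx₂]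
  have expand : convol
        (θ ∘ₗ TensorProduct.map (HopfAlgebra.antipode k : B →ₗ[k] B) LinearMap.id) θ (b ⊗ₜ[k] c)
      = LinearMap.mul' k A (TensorProduct.map
          (θ ∘ₗ TensorProduct.map (HopfAlgebra.antipode k : B →ₗ[k] B) LinearMap.id) θ
          (TensorProduct.tensorTensorTensorComm k B B C C
            ((Coalgebra.comul (R := k) b) ⊗ₜ[k] Coalgebra.comul (R := k) c))) := rfl
  rw [expand, key (Coalgebra.comul (R := k) b)]
  have h4 : LinearMap.mul' k B (TensorProduct.map (HopfAlgebra.antipode k : B →ₗ[k] B)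
      LinearMap.id (Coalgebra.comul (R := k) b)) = algebraMap k B (Coalgebra.counit (R := k) b) :=
    HopfAlgebra.mul_antipode_rTensor_comul_apply b
  rw [h4, Algebra.algebraMap_eq_smul_one, ← TensorProduct.smul_tmul', map_smul, hθone c,
    smul_smul, cunit_tmul, Algebra.algebraMap_eq_smul_one]

lemma convol_theta_T (θ : (B ⊗[k] C) →ₗ[k] A)
    (hθmul : ∀ (b b' : B) (c : C),
      θ ((b * b') ⊗ₜ[k] c) =
        LinearMap.mul' k A ((TensorProduct.map θ θ)
          (TensorProduct.tensorTensorTensorComm k B B C C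
            ((b ⊗ₜ[k] b') ⊗ₜ[k] Coalgebra.comul c))))
    (hθone : ∀ c : C, θ ((1 : B) ⊗ₜ[k] c) = Coalgebra.counit (R := k) c • (1 : A)) :
    convol θ (θ ∘ₗ TensorProduct.map (HopfAlgebra.antipode k : B →ₗ[k] B) LinearMap.id)
      = cunit := by
  apply TensorProduct.ext'
  intro b c
  have key : ∀ x : B ⊗[k] B,
      LinearMap.mul' k A (TensorProduct.map θ
          (θ ∘ₗ TensorProduct.map (HopfAlgebra.antipode k : B →ₗ[k] B) LinearMap.id)
        (TensorProduct.tensorTensorTensorComm k B B C C (x ⊗ₜ[k] Coalgebra.comul (R := k) c)))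
      = θ ((LinearMap.mul' k B
            (TensorProduct.map LinearMap.id (HopfAlgebra.antipode k : B →ₗ[k] B) x)) ⊗ₜ[k] c) := by
    intro x
    induction x using TensorProduct.induction_on with
    | zero => simp
    | tmul b₁ b₂ =>
        have h2 : ∀ y : C ⊗[k] C,
            LinearMap.mul' k A (TensorProduct.map θ
                (θ ∘ₗ TensorProduct.map (HopfAlgebra.antipode k : B →ₗ[k] B) LinearMap.id)
              (TensorProduct.tensorTensorTensorComm k B B C C ((b₁ ⊗ₜ[k] b₂) ⊗ₜ[k] y)))
            = LinearMap.mul' k A (TensorProduct.map θ θ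
              (TensorProduct.tensorTensorTensorComm k B B C C
                ((b₁ ⊗ₜ[k] (HopfAlgebra.antipode (R := k) b₂)) ⊗ₜ[k] y))) := by
          intro y
          induction y using TensorProduct.induction_on with
          | zero => simp
          | tmul c₁ c₂ => simp
          | add y₁ y₂ hy₁ hy₂ => simp only [TensorProduct.tmul_add, map_add, hy₁, hy₂]
        rw [h2, ← hθmul b₁ (HopfAlgebra.antipode (R := k) b₂) c]
        simp
    | add x₁ x₂ hx₁ hx₂ => simp only [TensorProduct.add_tmul, map_add, hx₁, hx₂]
  have expand : convol θ
        (θ ∘ₗ TensorProduct.map (HopfAlgebra.antipode k : B →ₗ[k] B) LinearMap.id) (b ⊗ₜ[k] c)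
      = LinearMap.mul' k A (TensorProduct.map θ
          (θ ∘ₗ TensorProduct.map (HopfAlgebra.antipode k : B →ₗ[k] B) LinearMap.id)
          (TensorProduct.tensorTensorTensorComm k B B C C
            ((Coalgebra.comul (R := k) b) ⊗ₜ[k] Coalgebra.comul (R := k) c))) := rfl
  rw [expand, key (Coalgebra.comul (R := k) b)]
  have h4 : LinearMap.mul' k B (TensorProduct.map LinearMap.id
      (HopfAlgebra.antipode k : B →ₗ[k] B) (Coalgebra.comul (R := k) b))
        = algebraMap k B (Coalgebra.counit (R := k) b) :=
    HopfAlgebra.mul_antipode_lTensor_comul_apply b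
  rw [h4, Algebra.algebraMap_eq_smul_one, ← TensorProduct.smul_tmul', map_smul, hθone c,
    smul_smul, cunit_tmul, Algebra.algebraMap_eq_smul_one]

end Aux3


/-- Let `A`, `B` be Hopf algebras and `C` a coalgebra over a field `k`, and
let `θ : B ⊗ C → A` be a covering: a surjective coalgebra morphism (for the tensor product
coalgebra structure on `B ⊗ C`) that measures `B` to `A`.  For any linear section `ι` of `θ`
(`θ ∘ ι = id`), the antipodes satisfy `S_A = θ ∘ (S_B ⊗ id) ∘ ι`. -/
theorem covering_transfers_antipode
    {k : Type*} [Field k] {A B C : Type*}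
    [Semiring A] [HopfAlgebra k A] [Semiring B] [HopfAlgebra k B]
    [AddCommMonoid C] [Module k C] [Coalgebra k C]
    (θ : (B ⊗[k] C) →ₗ[k] A)
    (hθsurj : Function.Surjective θ)
    (hθcomul : Coalgebra.comul ∘ₗ θ = (TensorProduct.map θ θ) ∘ₗ Coalgebra.comul)
    (hθcounit : Coalgebra.counit ∘ₗ θ = (Coalgebra.counit : (B ⊗[k] C) →ₗ[k] k))
    (hθmul : ∀ (b b' : B) (c : C),
      θ ((b * b') ⊗ₜ[k] c) =
        LinearMap.mul' k A ((TensorProduct.map θ θ)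
          (TensorProduct.tensorTensorTensorComm k B B C C
            ((b ⊗ₜ[k] b') ⊗ₜ[k] Coalgebra.comul c))))
    (hθone : ∀ c : C, θ ((1 : B) ⊗ₜ[k] c) = Coalgebra.counit (R := k) c • (1 : A))
    (ι : A →ₗ[k] (B ⊗[k] C)) (hι : θ ∘ₗ ι = LinearMap.id) :
    (HopfAlgebra.antipode k : A →ₗ[k] A)
      = θ ∘ₗ (TensorProduct.map (HopfAlgebra.antipode k : B →ₗ[k] B) LinearMap.id) ∘ₗ ι := by
  set T : (B ⊗[k] C) →ₗ[k] A :=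
    θ ∘ₗ TensorProduct.map (HopfAlgebra.antipode k : B →ₗ[k] B) LinearMap.id with hT
  have h1 : convol T θ = cunit := convol_T_theta θ hθmul hθone
  have h2 : convol θ T = cunit := convol_theta_T θ hθmul hθone
  have h3 : convol ((HopfAlgebra.antipode k : A →ₗ[k] A) ∘ₗ θ) θ = cunit :=
    convol_S_theta θ hθcomul hθcounit
  have key : (HopfAlgebra.antipode k : A →ₗ[k] A) ∘ₗ θ = T := by
    calc (HopfAlgebra.antipode k : A →ₗ[k] A) ∘ₗ θ
        = convol ((HopfAlgebra.antipode k : A →ₗ[k] A) ∘ₗ θ) cunit := (convol_cunit_right _).symm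
      _ = convol ((HopfAlgebra.antipode k : A →ₗ[k] A) ∘ₗ θ) (convol θ T) := by rw [h2]
      _ = convol (convol ((HopfAlgebra.antipode k : A →ₗ[k] A) ∘ₗ θ) θ) T :=
          (convol_assoc _ _ _).symm
      _ = convol cunit T := by rw [h3]
      _ = T := convol_cunit_left _
  ext a
  have hia : θ (ι a) = a := LinearMap.congr_fun hι a
  have := LinearMap.congr_fun key (ι a)
  simp only [LinearMap.comp_apply, hia] at this
  simpa [hT] using this
end
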